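/- Let P be a probability distribution on (ZMod 2) × (ZMod 2), let C₁, C₂ be F₂-linear subspaces of (ZMod 2)ⁿ, and let D = C₁ ⊓ C₂. On a probability space let δ be uniform on D and Δ = (Δ₁,…,Δₙ) i.i.d. with law P, independent of δ, and set Zᵢ = (δᵢ, δᵢ) + Δᵢ ∈ (ZMod 2)². Then for any decoder g : ((ZMod 2)²)ⁿ → D, if ε = P[g(Z) ≠ δ], then (1 − ε) · log |D| ≤ n · (log 2 + H_P(Δ⁽¹⁾ + Δ⁽²⁾) − H_P) + log 2, where H_P is the entropy of P and H_P(Δ⁽¹⁾ + Δ⁽²⁾) is the entropy of the sum of the two coordinates of one draw from P. (This is the finite-blocklength form of the necessary condition log₂|C₁ ∩ C₂|/n ≤ I[X₀⁽¹⁾; X₀⁽¹⁾ + X₀⁽²⁾, Y₀].) -/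

import Mathlib

open MeasureTheory

/-- Shannon entropy (in nats) of a random variable `X` taking values in a finite type,
`H[X] = ∑ s, (-P[X = s]) * log P[X = s]`. -/
noncomputable def entropy {Ω S : Type*} [MeasurableSpace Ω] [Fintype S]
    (μ : Measure Ω) (X : Ω → S) : ℝ :=
  ∑ s : S, Real.negMulLog (μ (X ⁻¹' {s})).toReal

/-- Conditional Shannon entropy (in nats), `H[X | Z] = H[(X, Z)] - H[Z]` (chain rule). -/
noncomputable def condEntropy {Ω S T : Type*} [MeasurableSpace Ω] [Fintype S] [Fintype T]
    (μ : Measure Ω) (X : Ω → S) (Z : Ω → T) : ℝ :=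
  entropy μ (fun ω => (X ω, Z ω)) - entropy μ Z

/-- Shannon entropy (in nats) of a probability distribution on a finite type. -/
noncomputable def distEntropy {S : Type*} [Fintype S] (P : PMF S) : ℝ :=
  ∑ s : S, Real.negMulLog (P s).toReal

/-- Shannon entropy (in nats), under a single draw `(Δ⁽¹⁾, Δ⁽²⁾) ∼ P`, of the sum
`Δ⁽¹⁾ + Δ⁽²⁾` of the two coordinates. -/
noncomputable def distEntropySum (P : PMF (ZMod 2 × ZMod 2)) : ℝ :=
  ∑ b : ZMod 2,
    Real.negMulLog (∑ a : ZMod 2 × ZMod 2, if a.1 + a.2 = b then P a else 0).toReal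

namespace Stmt14Aux

open Real Finset

set_option linter.unusedSectionVars false
set_option linter.unusedVariables false





lemma negMulLog_add_le {x y : ℝ} (hx : 0 ≤ x) (hy : 0 ≤ y) :
    Real.negMulLog (x + y) ≤ Real.negMulLog x + Real.negMulLog y := by
  rcases eq_or_lt_of_le hx with h | hx'
  · simp [← h]
  rcases eq_or_lt_of_le hy with h | hy'
  · simp [← h]
  have h1 : Real.log x ≤ Real.log (x + y) := Real.log_le_log hx' (by linarith)
  have h2 : Real.log y ≤ Real.log (x + y) := Real.log_le_log hy' (by linarith)
  simp only [Real.negMulLog, neg_mul]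
  nlinarith [mul_le_mul_of_nonneg_left h1 hx, mul_le_mul_of_nonneg_left h2 hy]

lemma negMulLog_sum_le {α : Type*} (s : Finset α) (f : α → ℝ) (hf : ∀ a ∈ s, 0 ≤ f a) :
    Real.negMulLog (∑ a ∈ s, f a) ≤ ∑ a ∈ s, Real.negMulLog (f a) := by
  classical
  induction s using Finset.induction_on with
  | empty => simp
  | insert a s hnot ih =>
    rw [Finset.sum_insert hnot, Finset.sum_insert hnot]
    calc Real.negMulLog (f a + ∑ x ∈ s, f x)
        ≤ Real.negMulLog (f a) + Real.negMulLog (∑ x ∈ s, f x) :=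
          negMulLog_add_le (hf a (Finset.mem_insert_self a s))
            (Finset.sum_nonneg fun x hx => hf x (Finset.mem_insert_of_mem hx))
      _ ≤ _ := by
          have := ih (fun x hx => hf x (Finset.mem_insert_of_mem hx))
          linarith

/-- Gibbs' inequality. -/
lemma gibbs {S : Type*} [Fintype S] (p q : S → ℝ) (hp : ∀ s, 0 ≤ p s)
    (hq : ∀ s, 0 ≤ q s) (hpq : ∀ s, p s ≠ 0 → q s ≠ 0)
    (hq1 : ∑ s, q s ≤ 1) (hp1 : ∑ s, p s = 1) :
    ∑ s, Real.negMulLog (p s) ≤ - ∑ s, p s * Real.log (q s) := by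
  have key : ∀ s, Real.negMulLog (p s) + p s * Real.log (q s) ≤ q s - p s := by
    intro s
    rcases eq_or_lt_of_le (hp s) with h | hps
    · simp [← h, hq s]
    · have hqs : 0 < q s := lt_of_le_of_ne (hq s) (Ne.symm (hpq s (ne_of_gt hps)))
      have hlog : Real.log (q s / p s) ≤ q s / p s - 1 :=
        Real.log_le_sub_one_of_pos (by positivity)
      rw [Real.log_div (ne_of_gt hqs) (ne_of_gt hps)] at hlog
      have := mul_le_mul_of_nonneg_left hlog (le_of_lt hps)
      have hcancel : p s * (q s / p s - 1) = q s - p s := by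
        field_simp
      rw [hcancel] at this
      simp only [Real.negMulLog, neg_mul]
      nlinarith
  have hsum : ∑ s : S, (Real.negMulLog (p s) + p s * Real.log (q s))
      ≤ ∑ s : S, (q s - p s) := Finset.sum_le_sum (fun s _ => key s)
  rw [Finset.sum_add_distrib, Finset.sum_sub_distrib, hp1] at hsum
  linarith

/-- Entropy of a prob vector supported in `T` is at most `log T.card`. -/
lemma vec_ent_le_log {S : Type*} [Fintype S] (p : S → ℝ) (hp : ∀ s, 0 ≤ p s)
    (hp1 : ∑ s, p s = 1) (T : Finset S) (hT : ∀ s, p s ≠ 0 → s ∈ T) (hT0 : 0 < T.card) :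
    ∑ s, Real.negMulLog (p s) ≤ Real.log T.card := by
  classical
  have hcard : (0:ℝ) < T.card := by exact_mod_cast hT0
  set q : S → ℝ := fun s => if s ∈ T then (T.card : ℝ)⁻¹ else 0 with hqdef
  have hq : ∀ s, 0 ≤ q s := by
    intro s; simp only [hqdef]; split <;> positivity
  have hq1 : ∑ s, q s ≤ 1 := by
    simp only [hqdef]
    rw [Finset.sum_ite_mem, Finset.univ_inter, Finset.sum_const, nsmul_eq_mul,
      mul_inv_cancel₀ (ne_of_gt hcard)]
  have h := gibbs p q hp hq (fun s hs => by
    simp only [hqdef, if_pos (hT s hs)]; positivity) hq1 hp1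
  refine h.trans ?_
  have : ∀ s, -(p s * Real.log (q s)) = p s * Real.log T.card := by
    intro s
    by_cases hps : p s = 0
    · simp [hps]
    · rw [hqdef]
      simp only [if_pos (hT s hps), Real.log_inv]
      ring
  rw [show -∑ s : S, p s * Real.log (q s) = ∑ s : S, -(p s * Real.log (q s)) by
    rw [Finset.sum_neg_distrib]]
  calc ∑ s, -(p s * Real.log (q s)) = ∑ s, p s * Real.log T.card :=
        Finset.sum_congr rfl fun s _ => this s
    _ = Real.log T.card := by rw [← Finset.sum_mul, hp1, one_mul]
    _ ≤ _ := le_refl _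




set_option linter.unusedSectionVars false
set_option linter.unusedVariables false



section FM

variable {I : Type*} [Fintype I] {S T U : Type*} [Fintype S] [Fintype T] [Fintype U]
  [DecidableEq S] [DecidableEq T] [DecidableEq U]

/-- fiber mass -/
noncomputable def fm (w : I → ℝ) (X : I → S) (s : S) : ℝ :=
  ∑ i, if X i = s then w i else 0

/-- entropy w.r.t. weight `w` -/
noncomputable def ent (w : I → ℝ) (X : I → S) : ℝ :=
  ∑ s, Real.negMulLog (fm w X s)

variable {w : I → ℝ}

lemma fm_nonneg (hw0 : ∀ i, 0 ≤ w i) (X : I → S) (s : S) : 0 ≤ fm w X s := by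
  refine Finset.sum_nonneg fun i _ => ?_
  split
  · exact hw0 i
  · exact le_refl 0

lemma sum_fm (w : I → ℝ) (X : I → S) : ∑ s, fm w X s = ∑ i, w i := by
  unfold fm
  rw [Finset.sum_comm]
  refine Finset.sum_congr rfl fun i _ => ?_
  rw [Finset.sum_ite_eq Finset.univ (X i) (fun _ => w i)]
  simp

lemma fm_comp (w : I → ℝ) (X : I → S) (k : S → T) (t : T) :
    fm w (fun i => k (X i)) t = ∑ s, if k s = t then fm w X s else 0 := by
  unfold fm
  have hR : ∀ s : S, (if k s = t then (∑ i, if X i = s then w i else 0) else 0)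
      = ∑ i, (if X i = s then (if k s = t then w i else 0) else 0) := by
    intro s
    by_cases h : k s = t
    · simp only [if_pos h]
    · simp only [if_neg h, ite_self, Finset.sum_const_zero]
  rw [Finset.sum_congr rfl fun s _ => hR s, Finset.sum_comm]
  refine Finset.sum_congr rfl fun i _ => ?_
  show (if k (X i) = t then w i else 0) = _
  rw [Finset.sum_ite_eq Finset.univ (X i) (fun s => if k s = t then w i else 0)]
  simp

lemma fm_eq_zero_of_support (hw0 : ∀ i, 0 ≤ w i) (X : I → S) {s : S}
    (h : ∀ i, w i ≠ 0 → X i ≠ s) : fm w X s = 0 := by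
  unfold fm
  refine Finset.sum_eq_zero fun i _ => ?_
  by_cases hw : w i = 0
  · simp [hw]
  · simp [h i hw]

lemma exists_of_fm_ne_zero {X : I → S} {s : S} (h : fm w X s ≠ 0) :
    ∃ i, w i ≠ 0 ∧ X i = s := by
  obtain ⟨i, _, hi⟩ := Finset.exists_ne_zero_of_sum_ne_zero h
  by_cases hx : X i = s
  · exact ⟨i, by simpa [hx] using hi, hx⟩
  · simp [hx] at hi

lemma ent_comp_le (hw0 : ∀ i, 0 ≤ w i) (X : I → S) (k : S → T) :
    ent w (fun i => k (X i)) ≤ ent w X := by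
  unfold ent
  calc ∑ t, Real.negMulLog (fm w (fun i => k (X i)) t)
      = ∑ t, Real.negMulLog (∑ s, if k s = t then fm w X s else 0) := by
        refine Finset.sum_congr rfl fun t _ => ?_; rw [fm_comp]
    _ ≤ ∑ t, ∑ s, Real.negMulLog (if k s = t then fm w X s else 0) := by
        refine Finset.sum_le_sum fun t _ => ?_
        refine negMulLog_sum_le _ _ fun s _ => ?_
        split
        · exact fm_nonneg hw0 X s
        · exact le_refl 0
    _ = ∑ s, ∑ t, Real.negMulLog (if k s = t then fm w X s else 0) := Finset.sum_comm
    _ = ∑ s, Real.negMulLog (fm w X s) := by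
        refine Finset.sum_congr rfl fun s _ => ?_
        have : ∀ t, Real.negMulLog (if k s = t then fm w X s else 0)
            = if k s = t then Real.negMulLog (fm w X s) else 0 := by
          intro t; split <;> simp
        rw [Finset.sum_congr rfl fun t _ => this t,
          Finset.sum_ite_eq Finset.univ (k s) (fun _ => Real.negMulLog (fm w X s))]
        simp

lemma ent_congr {X X' : I → S} (h : X = X') : ent w X = ent w X' := by rw [h]

lemma ent_comp_eq (hw0 : ∀ i, 0 ≤ w i) (X : I → S) (k : S → T) (r : T → S)
    (hr : ∀ s, r (k s) = s) : ent w (fun i => k (X i)) = ent w X := by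
  refine le_antisymm (ent_comp_le hw0 X k) ?_
  have h2 := ent_comp_le hw0 (fun i => k (X i)) r
  have h3 : (fun i => r (k (X i))) = X := funext fun i => hr (X i)
  rwa [h3] at h2

lemma ent_le_log_card (hw0 : ∀ i, 0 ≤ w i) (hw1 : ∑ i, w i = 1) (X : I → S)
    (T' : Finset S) (hT : ∀ i, w i ≠ 0 → X i ∈ T') (hT0 : 0 < T'.card) :
    ent w X ≤ Real.log T'.card := by
  refine vec_ent_le_log _ (fm_nonneg hw0 X) (by rw [sum_fm, hw1]) T' ?_ hT0
  intro s hs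
  obtain ⟨i, hwi, hXi⟩ := exists_of_fm_ne_zero hs
  exact hXi ▸ hT i hwi

end FM




section Pair

variable {I : Type*} [Fintype I] {S T : Type*} [Fintype S] [Fintype T]
  [DecidableEq S] [DecidableEq T] {w : I → ℝ}

lemma fm_pair_fst (w : I → ℝ) (X : I → S) (Y : I → T) (s : S) :
    ∑ t, fm w (fun i => (X i, Y i)) (s, t) = fm w X s := by
  unfold fm
  rw [Finset.sum_comm]
  refine Finset.sum_congr rfl fun i _ => ?_
  by_cases h : X i = s
  · simp only [Prod.mk.injEq, h, true_and, if_pos h]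
    rw [Finset.sum_ite_eq Finset.univ (Y i) (fun _ => w i)]
    simp
  · simp [Prod.mk.injEq, h]

lemma fm_pair_snd (w : I → ℝ) (X : I → S) (Y : I → T) (t : T) :
    ∑ s, fm w (fun i => (X i, Y i)) (s, t) = fm w Y t := by
  unfold fm
  rw [Finset.sum_comm]
  refine Finset.sum_congr rfl fun i _ => ?_
  by_cases h : Y i = t
  · simp only [Prod.mk.injEq, h, and_true, if_pos h]
    rw [Finset.sum_ite_eq Finset.univ (X i) (fun _ => w i)]
    simp
  · simp [Prod.mk.injEq, h]

lemma fm_le_fst (hw0 : ∀ i, 0 ≤ w i) (X : I → S) (Y : I → T) (s : S) (t : T) :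
    fm w (fun i => (X i, Y i)) (s, t) ≤ fm w X s := by
  rw [← fm_pair_fst w X Y s]
  exact Finset.single_le_sum (fun t' _ => fm_nonneg hw0 (fun i => (X i, Y i)) (s, t')) (Finset.mem_univ t)

lemma fm_le_snd (hw0 : ∀ i, 0 ≤ w i) (X : I → S) (Y : I → T) (s : S) (t : T) :
    fm w (fun i => (X i, Y i)) (s, t) ≤ fm w Y t := by
  rw [← fm_pair_snd w X Y t]
  exact Finset.single_le_sum (fun s' _ => fm_nonneg hw0 (fun i => (X i, Y i)) (s', t)) (Finset.mem_univ s)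

/-- Subadditivity of entropy. -/
lemma ent_pair_le (hw0 : ∀ i, 0 ≤ w i) (hw1 : ∑ i, w i = 1) (X : I → S) (Y : I → T) :
    ent w (fun i => (X i, Y i)) ≤ ent w X + ent w Y := by
  set XY := fun i => (X i, Y i) with hXY
  set p : S × T → ℝ := fm w XY with hp
  set q : S × T → ℝ := fun u => fm w X u.1 * fm w Y u.2 with hq
  have hppos : ∀ u, 0 ≤ p u := fun u => fm_nonneg hw0 _ _
  have hqpos : ∀ u, 0 ≤ q u := fun u => mul_nonneg (fm_nonneg hw0 _ _) (fm_nonneg hw0 _ _)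
  have hpq : ∀ u, p u ≠ 0 → q u ≠ 0 := by
    rintro ⟨s, t⟩ hu
    have h1 : 0 < p (s, t) := lt_of_le_of_ne (hppos _) (Ne.symm hu)
    have h2 : 0 < fm w X s := lt_of_lt_of_le h1 (fm_le_fst hw0 X Y s t)
    have h3 : 0 < fm w Y t := lt_of_lt_of_le h1 (fm_le_snd hw0 X Y s t)
    exact ne_of_gt (mul_pos h2 h3)
  have hq1 : ∑ u, q u ≤ 1 := by
    have hfac : ∑ u : S × T, q u = (∑ s, fm w X s) * (∑ t, fm w Y t) := by
      rw [Finset.sum_mul_sum, Fintype.sum_prod_type]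
    rw [hfac, sum_fm, sum_fm, hw1, one_mul]
  have hp1 : ∑ u, p u = 1 := by rw [hp, sum_fm, hw1]
  have h := gibbs p q hppos hqpos hpq hq1 hp1
  have hsplit : ∀ u : S × T, -(p u * Real.log (q u))
      = -(p u * Real.log (fm w X u.1)) + -(p u * Real.log (fm w Y u.2)) := by
    rintro ⟨s, t⟩
    by_cases hu : p (s, t) = 0
    · simp [hu]
    · have h1 : 0 < p (s, t) := lt_of_le_of_ne (hppos _) (Ne.symm hu)
      have h2 : 0 < fm w X s := lt_of_lt_of_le h1 (fm_le_fst hw0 X Y s t)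
      have h3 : 0 < fm w Y t := lt_of_lt_of_le h1 (fm_le_snd hw0 X Y s t)
      rw [hq]
      simp only
      rw [Real.log_mul (ne_of_gt h2) (ne_of_gt h3)]
      ring
  have hA : ∑ u : S × T, -(p u * Real.log (fm w X u.1)) = ent w X := by
    rw [Fintype.sum_prod_type]
    unfold ent
    refine Finset.sum_congr rfl fun s _ => ?_
    rw [show (∑ t, -(p (s, t) * Real.log (fm w X s)))
        = -((∑ t, p (s, t)) * Real.log (fm w X s)) by
      rw [Finset.sum_mul]; rw [← Finset.sum_neg_distrib]]
    rw [hp, fm_pair_fst]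
    rw [Real.negMulLog, neg_mul]
  have hB : ∑ u : S × T, -(p u * Real.log (fm w Y u.2)) = ent w Y := by
    rw [Fintype.sum_prod_type_right]
    unfold ent
    refine Finset.sum_congr rfl fun t _ => ?_
    rw [show (∑ s, -(p (s, t) * Real.log (fm w Y t)))
        = -((∑ s, p (s, t)) * Real.log (fm w Y t)) by
      rw [Finset.sum_mul]; rw [← Finset.sum_neg_distrib]]
    rw [hp, fm_pair_snd]
    rw [Real.negMulLog, neg_mul]
  calc ent w XY ≤ -∑ u, p u * Real.log (q u) := h
    _ = ∑ u, -(p u * Real.log (q u)) := by rw [Finset.sum_neg_distrib]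
    _ = ∑ u : S × T, (-(p u * Real.log (fm w X u.1)) + -(p u * Real.log (fm w Y u.2))) :=
        Finset.sum_congr rfl fun u _ => hsplit u
    _ = ent w X + ent w Y := by rw [Finset.sum_add_distrib, hA, hB]

/-- Entropy of independent pair. -/
lemma ent_pair_indep (hw1 : ∑ i, w i = 1) (X : I → S) (Y : I → T)
    (h : ∀ s t, fm w (fun i => (X i, Y i)) (s, t) = fm w X s * fm w Y t) :
    ent w (fun i => (X i, Y i)) = ent w X + ent w Y := by
  unfold ent
  rw [Fintype.sum_prod_type]
  have : ∀ s t, Real.negMulLog (fm w (fun i => (X i, Y i)) (s, t))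
      = fm w Y t * Real.negMulLog (fm w X s) + fm w X s * Real.negMulLog (fm w Y t) := by
    intro s t
    rw [h s t, Real.negMulLog_mul]
  rw [Finset.sum_congr rfl fun s _ => Finset.sum_congr rfl fun t _ => this s t]
  have hX1 : ∑ s, fm w X s = 1 := by rw [sum_fm, hw1]
  have hY1 : ∑ t, fm w Y t = 1 := by rw [sum_fm, hw1]
  rw [show (∑ s, ∑ t, (fm w Y t * Real.negMulLog (fm w X s)
      + fm w X s * Real.negMulLog (fm w Y t)))
      = ∑ s, ((∑ t, fm w Y t) * Real.negMulLog (fm w X s)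
        + fm w X s * ∑ t, Real.negMulLog (fm w Y t)) from
    Finset.sum_congr rfl fun s _ => by
      rw [Finset.sum_add_distrib, Finset.sum_mul, ← Finset.mul_sum]]
  rw [Finset.sum_add_distrib]
  rw [hY1, ← Finset.sum_mul, hX1]
  simp

/-- Conditional entropy bound via a per-fiber bound `B`. -/
lemma ent_pair_sub_le (hw0 : ∀ i, 0 ≤ w i) (X : I → S) (Y : I → T) (B : T → ℝ)
    (hB : ∀ t, fm w Y t ≠ 0 →
      (∑ s, Real.negMulLog (fm w (fun i => (X i, Y i)) (s, t) / fm w Y t)) ≤ B t) :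
    ent w (fun i => (X i, Y i)) ≤ ent w Y + ∑ t, fm w Y t * B t := by
  unfold ent
  rw [Fintype.sum_prod_type_right]
  rw [show (∑ t, Real.negMulLog (fm w Y t)) + ∑ t, fm w Y t * B t
      = ∑ t, (Real.negMulLog (fm w Y t) + fm w Y t * B t) by
    rw [Finset.sum_add_distrib]]
  refine Finset.sum_le_sum fun t _ => ?_
  by_cases ht : fm w Y t = 0
  · have hall : ∀ s, fm w (fun i => (X i, Y i)) (s, t) = 0 := by
      intro s
      have h1 := fm_le_snd hw0 X Y s t
      have h2 := fm_nonneg hw0 (fun i => (X i, Y i)) (s, t)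
      rw [ht] at h1
      linarith
    simp [hall, ht]
  · have hYpos : 0 < fm w Y t := lt_of_le_of_ne (fm_nonneg hw0 Y t) (Ne.symm ht)
    have hdecomp : ∀ s, Real.negMulLog (fm w (fun i => (X i, Y i)) (s, t))
        = (fm w (fun i => (X i, Y i)) (s, t) / fm w Y t) * Real.negMulLog (fm w Y t)
          + fm w Y t * Real.negMulLog (fm w (fun i => (X i, Y i)) (s, t) / fm w Y t) := by
      intro s
      set a := fm w (fun i => (X i, Y i)) (s, t) with ha
      have h1 : fm w Y t * (a / fm w Y t) = a := mul_div_cancel₀ _ ht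
      calc Real.negMulLog a = Real.negMulLog (fm w Y t * (a / fm w Y t)) := by rw [h1]
        _ = (a / fm w Y t) * Real.negMulLog (fm w Y t)
            + fm w Y t * Real.negMulLog (a / fm w Y t) := Real.negMulLog_mul _ _
    rw [Finset.sum_congr rfl fun s _ => hdecomp s, Finset.sum_add_distrib]
    have e1 : ∑ s, (fm w (fun i => (X i, Y i)) (s, t) / fm w Y t) * Real.negMulLog (fm w Y t)
        = Real.negMulLog (fm w Y t) := by
      rw [← Finset.sum_mul, ← Finset.sum_div, fm_pair_snd, div_self ht, one_mul]
    have e2 : ∑ s, fm w Y t * Real.negMulLog (fm w (fun i => (X i, Y i)) (s, t) / fm w Y t)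
        = fm w Y t
          * ∑ s, Real.negMulLog (fm w (fun i => (X i, Y i)) (s, t) / fm w Y t) :=
      (Finset.mul_sum _ _ _).symm
    rw [e1, e2]
    have := mul_le_mul_of_nonneg_left (hB t ht) (le_of_lt hYpos)
    linarith

end Pair




section Tuple

variable {I : Type*} [Fintype I] {w : I → ℝ}

/-- entropy of a tuple is at most the sum of coordinate entropies -/
lemma ent_tuple_le (hw0 : ∀ i, 0 ≤ w i) (hw1 : ∑ i, w i = 1)
    {β : Type*} [Fintype β] [DecidableEq β] :
    ∀ (n : ℕ) (X : I → Fin n → β), ent w X ≤ ∑ j, ent w (fun i => X i j) := by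
  intro n
  induction n with
  | zero =>
    intro X
    haveI : Unique (Fin 0 → β) := ⟨⟨fun i => i.elim0⟩, fun f => funext fun i => i.elim0⟩
    have h0 : ent w X = 0 := by
      unfold ent
      rw [Fintype.sum_unique]
      have hfm : fm w X default = 1 := by
        unfold fm
        have hd : ∀ i, X i = default := fun i => Unique.eq_default _
        simp [hd, hw1]
      rw [hfm, Real.negMulLog_one]
    rw [h0]
    simp
  | succ n ih =>
    intro X
    have hstep : ent w X = ent w (fun i => (X i 0, Fin.tail (X i))) := by
      have := ent_comp_eq (w := w) hw0 X
        (fun v => (v 0, Fin.tail v)) (fun u => Fin.cons u.1 u.2)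
        (fun v => Fin.cons_self_tail v)
      exact this.symm
    rw [hstep]
    calc ent w (fun i => (X i 0, Fin.tail (X i)))
        ≤ ent w (fun i => X i 0) + ent w (fun i => Fin.tail (X i)) :=
          ent_pair_le hw0 hw1 _ _
      _ ≤ ent w (fun i => X i 0) + ∑ j : Fin n, ent w (fun i => Fin.tail (X i) j) := by
          have := ih (fun i => Fin.tail (X i))
          linarith
      _ = ∑ j : Fin (n + 1), ent w (fun i => X i j) := by
          rw [Fin.sum_univ_succ]
          rfl

end Tuple

section Prod

variable {α : Type*} [Fintype α] [DecidableEq α]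

lemma sum_prod_pi {ι : Type*} [Fintype ι] [DecidableEq ι] (p : α → ℝ)
    (h1 : ∑ a, p a = 1) : ∑ d : ι → α, ∏ i, p (d i) = 1 := by
  have h := Finset.prod_univ_sum (fun _ : ι => (Finset.univ : Finset α))
    (fun _ a => p a)
  rw [Fintype.piFinset_univ] at h
  rw [← h]
  simp [h1]

lemma ent_prod_pi (p : α → ℝ) (h1 : ∑ a, p a = 1) :
    ∀ n : ℕ, ∑ d : Fin n → α, Real.negMulLog (∏ i, p (d i))
      = n * ∑ a, Real.negMulLog (p a) := by
  intro n
  induction n with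
  | zero =>
    haveI : Unique (Fin 0 → α) := ⟨⟨fun i => i.elim0⟩, fun f => funext fun i => i.elim0⟩
    rw [Fintype.sum_unique]
    simp
  | succ n ih =>
    set e : (α × (Fin n → α)) ≃ (Fin (n+1) → α) := Fin.consEquiv (fun _ => α) with he
    rw [← Equiv.sum_comp e (fun d => Real.negMulLog (∏ i, p (d i)))]
    have hsplit : ∀ x : α × (Fin n → α),
        (∏ i, p (e x i)) = p x.1 * ∏ i : Fin n, p (x.2 i) := by
      rintro ⟨b, t⟩
      rw [Fin.prod_univ_succ]
      congr 1
    rw [Finset.sum_congr rfl fun x _ => by rw [hsplit x]]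
    rw [Fintype.sum_prod_type]
    have hinner : ∀ b : α, ∑ t : Fin n → α, Real.negMulLog (p b * ∏ i, p (t i))
        = (∑ t : Fin n → α, ∏ i, p (t i)) * Real.negMulLog (p b)
          + p b * ∑ t : Fin n → α, Real.negMulLog (∏ i, p (t i)) := by
      intro b
      rw [Finset.sum_congr rfl fun t _ => Real.negMulLog_mul (p b) (∏ i, p (t i))]
      rw [Finset.sum_add_distrib, ← Finset.sum_mul, ← Finset.mul_sum]
    rw [Finset.sum_congr rfl fun b _ => hinner b]
    rw [Finset.sum_add_distrib]
    rw [sum_prod_pi p h1, ih]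
    simp only [one_mul]
    rw [← Finset.sum_mul, h1, one_mul]
    push_cast
    ring

/-- coordinate marginal of a product distribution -/
lemma marg_pi {ι : Type*} [Fintype ι] [DecidableEq ι] (p : α → ℝ)
    (h1 : ∑ a, p a = 1) (j : ι) (a0 : α) :
    (∑ d : ι → α, if d j = a0 then ∏ i, p (d i) else 0) = p a0 := by
  classical
  set e := Equiv.funSplitAt j α with he
  rw [← Equiv.sum_comp e.symm (fun d => if d j = a0 then ∏ i, p (d i) else 0)]
  rw [Fintype.sum_prod_type]
  have h2 : ∀ (b : α) (h : {i // i ≠ j} → α), (e.symm (b, h)) j = b := by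
    intro b h
    simp [he]
  have h3 : ∀ (b : α) (h : {i // i ≠ j} → α),
      (∏ i, p (e.symm (b, h) i)) = p b * ∏ i : {i // i ≠ j}, p (h i) := by
    intro b h
    rw [Fintype.prod_eq_mul_prod_compl j]
    congr 1
    · rw [h2]
    · rw [Finset.prod_subtype ({j}ᶜ : Finset ι)
        (p := fun i => i ≠ j) (fun i => by simp) (fun i => p (e.symm (b, h) i))]
      refine Finset.prod_congr rfl fun i _ => ?_
      congr 1
      simp [he, Equiv.funSplitAt, i.2]
  calc (∑ b : α, ∑ h : {i // i ≠ j} → α,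
        if (e.symm (b, h)) j = a0 then ∏ i, p (e.symm (b, h) i) else 0)
      = ∑ b : α, ∑ h : {i // i ≠ j} → α,
        (if b = a0 then p b * ∏ i : {i // i ≠ j}, p (h i) else 0) := by
        refine Finset.sum_congr rfl fun b _ => Finset.sum_congr rfl fun h _ => ?_
        rw [h2, h3]
    _ = ∑ b : α, (if b = a0 then p b * ∑ h : {i // i ≠ j} → α,
          ∏ i : {i // i ≠ j}, p (h i) else 0) := by
        refine Finset.sum_congr rfl fun b _ => ?_
        by_cases hb : b = a0
        · rw [if_pos hb]
          calc (∑ h : {i // i ≠ j} → α, if b = a0 then p b * ∏ i : {i // i ≠ j}, p (h i) else 0)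
              = ∑ h : {i // i ≠ j} → α, p b * ∏ i : {i // i ≠ j}, p (h i) :=
                Finset.sum_congr rfl fun h _ => if_pos hb
            _ = p b * ∑ h : {i // i ≠ j} → α, ∏ i : {i // i ≠ j}, p (h i) :=
                (Finset.mul_sum _ _ _).symm
        · simp [hb]
    _ = p a0 := by
        rw [sum_prod_pi p h1]
        rw [Finset.sum_ite_eq' Finset.univ a0 (fun b => p b * 1)]
        simp

end Prod




section ProdWeight

variable {S T U : Type*} [Fintype S] [Fintype T] [Fintype U]
  [DecidableEq S] [DecidableEq T] [DecidableEq U]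

lemma fm_id {I : Type*} [Fintype I] [DecidableEq I] (w : I → ℝ) (u : I) :
    fm w (fun x => x) u = w u := by
  unfold fm
  rw [Finset.sum_ite_eq' Finset.univ u w]
  simp

lemma fm_pair_id (w : S × T → ℝ) (u : S × T) :
    fm w (fun x => (x.1, x.2)) u = w u :=
  fm_id w u

lemma fm_fst_prod (f : S → ℝ) (g : T → ℝ) (hg : ∑ t, g t = 1) (s : S) :
    fm (fun x : S × T => f x.1 * g x.2) (fun x => x.1) s = f s := by
  unfold fm
  rw [Fintype.sum_prod_type]
  have h1 : ∀ s' : S, (∑ t : T, if s' = s then f s' * g t else 0)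
      = if s' = s then f s' else 0 := by
    intro s'
    by_cases h : s' = s
    · simp only [if_pos h, ← Finset.mul_sum, hg, mul_one]
    · simp [h]
  calc (∑ s' : S, ∑ t : T, if s' = s then f s' * g t else 0)
      = ∑ s' : S, if s' = s then f s' else 0 :=
        Finset.sum_congr rfl fun s' _ => h1 s'
    _ = f s := by rw [Finset.sum_ite_eq' Finset.univ s f]; simp

lemma fm_snd_comp_prod (f : S → ℝ) (g : T → ℝ) (hf : ∑ s, f s = 1) (k : T → U) (u : U) :
    fm (fun x : S × T => f x.1 * g x.2) (fun x => k x.2) u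
      = ∑ t, if k t = u then g t else 0 := by
  unfold fm
  rw [Fintype.sum_prod_type]
  have h1 : ∀ s' : S, (∑ t : T, if k t = u then f s' * g t else 0)
      = f s' * ∑ t : T, if k t = u then g t else 0 := by
    intro s'
    rw [Finset.mul_sum]
    refine Finset.sum_congr rfl fun t _ => ?_
    by_cases h : k t = u <;> simp [h]
  calc (∑ s' : S, ∑ t : T, if k t = u then f s' * g t else 0)
      = ∑ s' : S, f s' * ∑ t : T, if k t = u then g t else 0 :=
        Finset.sum_congr rfl fun s' _ => h1 s'
    _ = _ := by rw [← Finset.sum_mul, hf, one_mul]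

lemma fm_snd_prod (f : S → ℝ) (g : T → ℝ) (hf : ∑ s, f s = 1) (t : T) :
    fm (fun x : S × T => f x.1 * g x.2) (fun x => x.2) t = g t := by
  have h := fm_snd_comp_prod f g hf (fun t => t) t
  rw [Finset.sum_ite_eq' Finset.univ t g] at h
  simpa using h

end ProdWeight


end Stmt14Aux

open Stmt14Aux in
/-- Let `D = C₁ ⊓ C₂`, let `δ` be uniform on `D`, `Δ` i.i.d. with law `P`
independent of `δ`, and `Zᵢ = (δᵢ, δᵢ) + Δᵢ`.  For any decoder `g` with error probability
`ε = P[g(Z) ≠ δ]`, one has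
`(1 - ε) · log |D| ≤ n · (log 2 + H_P(Δ⁽¹⁾ + Δ⁽²⁾) - H_P) + log 2`, the finite-blocklength
form of the condition `log₂|C₁ ∩ C₂|/n ≤ I[X₀⁽¹⁾; X₀⁽¹⁾ + X₀⁽²⁾, Y₀]`. -/
theorem stmt_14 {Ω : Type*} [MeasurableSpace Ω] (μ : Measure Ω) [IsProbabilityMeasure μ]
    (n : ℕ) (P : PMF (ZMod 2 × ZMod 2))
    (C₁ C₂ : Submodule (ZMod 2) (Fin n → ZMod 2))
    (D : Submodule (ZMod 2) (Fin n → ZMod 2)) (hD : D = C₁ ⊓ C₂)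
    (δ : Ω → Fin n → ZMod 2) (Δ : Ω → Fin n → ZMod 2 × ZMod 2)
    (Z : Ω → Fin n → ZMod 2 × ZMod 2)
    (hδm : ∀ c, MeasurableSet (δ ⁻¹' {c}))
    (hΔm : ∀ d, MeasurableSet (Δ ⁻¹' {d}))
    (hδmem : ∀ ω, δ ω ∈ D)
    (hδ : ∀ c ∈ D, μ (δ ⁻¹' {c}) = (Nat.card D : ENNReal)⁻¹)
    (hΔ : ∀ d, μ (Δ ⁻¹' {d}) = ∏ i, P (d i))
    (hindep : ∀ c d, μ (δ ⁻¹' {c} ∩ Δ ⁻¹' {d}) = μ (δ ⁻¹' {c}) * μ (Δ ⁻¹' {d}))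
    (hZ : ∀ ω i, Z ω i = (δ ω i, δ ω i) + Δ ω i)
    (g : (Fin n → ZMod 2 × ZMod 2) → D) (ε : ℝ)
    (hε : ε = (μ {ω | (g (Z ω) : Fin n → ZMod 2) ≠ δ ω}).toReal) :
    (1 - ε) * Real.log (Nat.card D)
      ≤ n * (Real.log 2 + distEntropySum P - distEntropy P) + Real.log 2 := by
  classical
  -- the real pmf
  set p : ZMod 2 × ZMod 2 → ℝ := fun a => (P a).toReal with hpdef
  have hp0 : ∀ a, 0 ≤ p a := fun a => ENNReal.toReal_nonneg
  have hPtop : ∀ a, P a ≠ ⊤ := fun a => P.apply_ne_top a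
  have hPsum : ∑ a, P a = 1 := by rw [← tsum_fintype (L := SummationFilter.unconditional _)]; exact P.tsum_coe
  have hp1 : ∑ a, p a = 1 := by
    have h := ENNReal.toReal_sum (s := Finset.univ) (f := fun a => P a)
      (fun a _ => hPtop a)
    rw [hPsum] at h
    simpa using h.symm
  -- cardinality of D
  set N : ℕ := Nat.card ↥D with hNdef
  have hN1 : 1 ≤ N := Nat.one_le_iff_ne_zero.mpr (Nat.card_pos (α := ↥D)).ne'
  have hNpos : (0:ℝ) < N := by exact_mod_cast Nat.lt_of_lt_of_le Nat.zero_lt_one hN1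
  have hNfilter : (Finset.univ.filter (fun c : Fin n → ZMod 2 => c ∈ D)).card = N := by
    rw [hNdef, Nat.card_eq_fintype_card, Fintype.card_subtype]
  -- weights
  set a : (Fin n → ZMod 2) → ℝ := fun c => if c ∈ D then (N:ℝ)⁻¹ else 0 with hadef
  set m : (Fin n → ZMod 2 × ZMod 2) → ℝ := fun d => ∏ i, p (d i) with hmdef
  set w : (Fin n → ZMod 2) × (Fin n → ZMod 2 × ZMod 2) → ℝ :=
    fun x => a x.1 * m x.2 with hwdef
  have hδtoReal : ∀ c, (μ (δ ⁻¹' {c})).toReal = a c := by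
    intro c
    by_cases hc : c ∈ D
    · rw [hδ c hc, hadef]
      simp [hc, ENNReal.toReal_inv]
    · have hempty : δ ⁻¹' {c} = ∅ := by
        ext ω
        simp only [Set.mem_preimage, Set.mem_singleton_iff, Set.mem_empty_iff_false,
          iff_false]
        intro h
        exact hc (h ▸ hδmem ω)
      rw [hempty]
      simp [hadef, hc]
  have hΔtoReal : ∀ d, (μ (Δ ⁻¹' {d})).toReal = m d := by
    intro d
    rw [hΔ d, hmdef, ENNReal.toReal_prod]
  have hwμ : ∀ x, (μ (δ ⁻¹' {x.1} ∩ Δ ⁻¹' {x.2})).toReal = w x := by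
    intro x
    rw [hindep x.1 x.2, ENNReal.toReal_mul, hδtoReal, hΔtoReal]
  have ha0 : ∀ c, 0 ≤ a c := by
    intro c
    rw [hadef]
    simp only
    split
    · positivity
    · exact le_refl 0
  have hm0 : ∀ d, 0 ≤ m d := by
    intro d
    rw [hmdef]
    exact Finset.prod_nonneg fun i _ => hp0 _
  have hw0 : ∀ x, 0 ≤ w x := fun x => mul_nonneg (ha0 _) (hm0 _)
  have hsum_a : ∑ c, a c = 1 := by
    rw [hadef]
    simp only
    rw [← Finset.sum_filter, Finset.sum_const, hNfilter, nsmul_eq_mul,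
      mul_inv_cancel₀ (ne_of_gt hNpos)]
  have hsum_m : ∑ d, m d = 1 := sum_prod_pi p hp1
  have hw1 : ∑ x, w x = 1 := by
    rw [hwdef, Fintype.sum_prod_type]
    rw [Finset.sum_congr rfl fun c _ => by
      rw [← Finset.mul_sum (Finset.univ) (fun d => m d) (a c), hsum_m, mul_one]]
    exact hsum_a
  -- entropy of the codeword
  have hHδ : ent w (fun x => x.1) = Real.log N := by
    unfold Stmt14Aux.ent
    rw [Finset.sum_congr rfl fun c _ => by rw [fm_fst_prod a m hsum_m c]]
    have h1 : ∀ c, Real.negMulLog (a c)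
        = if c ∈ D then (N:ℝ)⁻¹ * Real.log N else 0 := by
      intro c
      rw [hadef]
      by_cases hc : c ∈ D
      · simp only [if_pos hc]
        rw [Real.negMulLog, Real.log_inv]
        ring
      · simp [hc]
    rw [Finset.sum_congr rfl fun c _ => h1 c, ← Finset.sum_filter, Finset.sum_const,
      hNfilter, nsmul_eq_mul]
    field_simp
  -- entropy of the noise
  have hHΔ : ent w (fun x => x.2) = n * distEntropy P := by
    unfold Stmt14Aux.ent
    rw [Finset.sum_congr rfl fun d _ => by rw [fm_snd_prod a m hsum_a d]]
    have h := ent_prod_pi p hp1 n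
    rw [hmdef]
    exact h
  -- entropy of the pair, by independence
  have hpf : ∀ c d, fm w (fun x => (x.1, x.2)) (c, d)
      = fm w (fun x => x.1) c * fm w (fun x => x.2) d := by
    intro c d
    rw [fm_pair_id w (c, d), fm_fst_prod a m hsum_m, fm_snd_prod a m hsum_a]
  have hJoint : ent w (fun x => (x.1, x.2)) = Real.log N + n * distEntropy P := by
    have := ent_pair_indep hw1 (fun x : (Fin n → ZMod 2) × (Fin n → ZMod 2 × ZMod 2) => x.1)
      (fun x => x.2) hpf
    rw [this, hHδ, hHΔ]
  -- the channel output map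
  set zmap : (Fin n → ZMod 2) × (Fin n → ZMod 2 × ZMod 2) → (Fin n → ZMod 2 × ZMod 2) :=
    fun x j => (x.1 j, x.1 j) + x.2 j with hzmapdef
  have hadd2 : ∀ u v : ZMod 2 × ZMod 2, u + (u + v) = v := by decide
  have hXZ : ent w (fun x => (x.1, zmap x)) = ent w (fun x => (x.1, x.2)) := by
    set kk : ((Fin n → ZMod 2) × (Fin n → ZMod 2 × ZMod 2))
        → ((Fin n → ZMod 2) × (Fin n → ZMod 2 × ZMod 2)) :=
      fun y => (y.1, fun j => (y.1 j, y.1 j) + y.2 j) with hkkdef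
    have hkk : ∀ y, kk (kk y) = y := by
      intro y
      refine Prod.ext rfl (funext fun j => ?_)
      exact hadd2 _ _
    exact ent_comp_eq hw0 (fun x => x) kk kk hkk
  -- decoder, error indicator
  set Gm : (Fin n → ZMod 2 × ZMod 2) → (Fin n → ZMod 2) :=
    fun z => (g z : Fin n → ZMod 2) with hGdef
  set E : ((Fin n → ZMod 2) × (Fin n → ZMod 2 × ZMod 2)) → Bool :=
    fun x => decide (Gm (zmap x) ≠ x.1) with hEdef
  have hZω : ∀ ω, Z ω = zmap (δ ω, Δ ω) := fun ω => funext fun j => hZ ω j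
  -- the error probability as a fiber mass
  have hfmE : fm w E true = ε := by
    have hset : {ω | (g (Z ω) : Fin n → ZMod 2) ≠ δ ω}
        = ⋃ x ∈ Finset.univ.filter (fun x => E x = true),
            (δ ⁻¹' {x.1} ∩ Δ ⁻¹' {x.2}) := by
      ext ω
      simp only [Set.mem_setOf_eq, Set.mem_iUnion, Finset.mem_filter, Finset.mem_univ,
        true_and, Set.mem_inter_iff, Set.mem_preimage, Set.mem_singleton_iff]
      constructor
      · intro h
        refine ⟨(δ ω, Δ ω), ?_, rfl, rfl⟩
        show decide (Gm (zmap (δ ω, Δ ω)) ≠ (δ ω, Δ ω).1) = true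
        rw [decide_eq_true_eq, ← hZω ω]
        exact h
      · rintro ⟨x, hx, h1, h2⟩
        obtain ⟨x1, x2⟩ := x
        simp only at h1 h2
        subst h1
        subst h2
        rw [hEdef] at hx
        simp only [decide_eq_true_eq] at hx
        rw [hZω ω]
        exact hx
    have hdisj : (↑(Finset.univ.filter (fun x => E x = true)) :
        Set ((Fin n → ZMod 2) × (Fin n → ZMod 2 × ZMod 2))).PairwiseDisjoint
        (fun x => δ ⁻¹' {x.1} ∩ Δ ⁻¹' {x.2}) := by
      intro x _ y _ hxy
      rw [Function.onFun]
      rw [Set.disjoint_left]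
      intro ω h1 h2
      simp only [Set.mem_inter_iff, Set.mem_preimage, Set.mem_singleton_iff] at h1 h2
      exact hxy (Prod.ext (h1.1.symm.trans h2.1) (h1.2.symm.trans h2.2))
    have hmeas : ∀ x ∈ Finset.univ.filter (fun x => E x = true),
        MeasurableSet (δ ⁻¹' {x.1} ∩ Δ ⁻¹' {x.2}) :=
      fun x _ => (hδm x.1).inter (hΔm x.2)
    rw [hε, hset, measure_biUnion_finset hdisj hmeas,
      ENNReal.toReal_sum (fun x _ => measure_ne_top μ _)]
    rw [Finset.sum_congr rfl fun x _ => hwμ x, Finset.sum_filter]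
    unfold Stmt14Aux.fm
    exact rfl
  -- Fano step
  have hEW : ent w (fun x => (x.1, zmap x)) = ent w (fun x => (x.1, (E x, zmap x))) := by
    set k5 : ((Fin n → ZMod 2) × (Fin n → ZMod 2 × ZMod 2))
        → (Fin n → ZMod 2) × (Bool × (Fin n → ZMod 2 × ZMod 2)) :=
      fun u => (u.1, (decide (Gm u.2 ≠ u.1), u.2)) with hk5def
    have h := ent_comp_eq hw0 (fun x => (x.1, zmap x)) k5
      (fun v => (v.1, v.2.2)) (fun u => rfl)
    exact h.symm
  have hDmem : ∀ x : (Fin n → ZMod 2) × (Fin n → ZMod 2 × ZMod 2),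
      w x ≠ 0 → x.1 ∈ D := by
    intro x hx
    rw [hwdef] at hx
    simp only [mul_ne_zero_iff] at hx
    by_contra hc
    apply hx.1
    rw [hadef]
    simp [hc]
  have hcond : ent w (fun x => (x.1, (E x, zmap x)))
      ≤ ent w (fun x => (E x, zmap x))
        + ∑ t : Bool × (Fin n → ZMod 2 × ZMod 2),
            fm w (fun x => (E x, zmap x)) t * (if t.1 then Real.log N else 0) := by
    refine ent_pair_sub_le hw0 (fun x => x.1) (fun x => (E x, zmap x))
      (fun t => if t.1 then Real.log N else 0) ?_
    intro t ht
    obtain ⟨e, z⟩ := t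
    have hq0 : ∀ s, 0 ≤ fm w (fun x => (x.1, (E x, zmap x))) (s, (e, z))
        / fm w (fun x => (E x, zmap x)) (e, z) :=
      fun s => div_nonneg (fm_nonneg hw0 _ _) (fm_nonneg hw0 _ _)
    have hq1 : ∑ s, fm w (fun x => (x.1, (E x, zmap x))) (s, (e, z))
        / fm w (fun x => (E x, zmap x)) (e, z) = 1 := by
      rw [← Finset.sum_div, fm_pair_snd, div_self ht]
    have hsupp : ∀ s, fm w (fun x => (x.1, (E x, zmap x))) (s, (e, z))
        / fm w (fun x => (E x, zmap x)) (e, z) ≠ 0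
        → s ∈ D ∧ (e = false → s = Gm z) := by
      intro s hq
      have hfm : fm w (fun x => (x.1, (E x, zmap x))) (s, (e, z)) ≠ 0 := by
        intro h0
        exact hq (by rw [h0, zero_div])
      obtain ⟨x, hwx, hx⟩ := exists_of_fm_ne_zero hfm
      have hx1 : x.1 = s := congrArg Prod.fst hx
      have hx2 : E x = e := congrArg (fun u => u.2.1) hx
      have hx3 : zmap x = z := congrArg (fun u => u.2.2) hx
      refine ⟨hx1 ▸ hDmem x hwx, ?_⟩
      intro hf
      rw [hf] at hx2
      rw [hEdef] at hx2
      simp only [decide_eq_false_iff_not, not_not] at hx2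
      rw [← hx1, ← hx2, hx3]
    cases e with
    | false =>
      have h := vec_ent_le_log _ hq0 hq1 ({Gm z} : Finset (Fin n → ZMod 2))
        (fun s hs => Finset.mem_singleton.mpr ((hsupp s hs).2 rfl)) (by simp)
      simpa using h
    | true =>
      have h := vec_ent_le_log _ hq0 hq1
        (Finset.univ.filter (fun c : Fin n → ZMod 2 => c ∈ D))
        (fun s hs => Finset.mem_filter.mpr ⟨Finset.mem_univ s, (hsupp s hs).1⟩)
        (by rw [hNfilter]; omega)
      rw [hNfilter] at h
      simpa using h
  have hsum_t : ∑ t : Bool × (Fin n → ZMod 2 × ZMod 2),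
      fm w (fun x => (E x, zmap x)) t * (if t.1 then Real.log N else 0)
      = ε * Real.log N := by
    rw [Fintype.sum_prod_type, Fintype.sum_bool]
    simp only [if_pos, if_neg, Bool.false_eq_true, not_false_iff, ite_true, ite_false,
      mul_zero, mul_one, Finset.sum_const_zero, add_zero]
    rw [← Finset.sum_mul]
    rw [fm_pair_fst w E zmap true, hfmE]
  have hEnt : ent w (fun x => (E x, zmap x)) ≤ ent w E + ent w zmap :=
    ent_pair_le hw0 hw1 E zmap
  have hElog : ent w E ≤ Real.log 2 := by
    have h := ent_le_log_card hw0 hw1 E Finset.univ (fun i _ => Finset.mem_univ _)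
      (by simp)
    simpa using h
  -- bound on the output entropy
  have hz2 : ∀ a b c : ZMod 2, (a + b) + (a + c) = b + c := by decide
  have hHZ : ent w zmap ≤ n * (Real.log 2 + distEntropySum P) := by
    calc ent w zmap ≤ ∑ j, ent w (fun x => zmap x j) := ent_tuple_le hw0 hw1 n zmap
      _ ≤ ∑ j : Fin n, (Real.log 2 + distEntropySum P) := by
          refine Finset.sum_le_sum fun j _ => ?_
          set k2 : ZMod 2 × ZMod 2 → ZMod 2 × ZMod 2 := fun u => (u.1, u.1 + u.2)
            with hk2def
          have hk2 : ∀ u, k2 (k2 u) = u := by decide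
          have h1 : ent w (fun x => zmap x j)
              = ent w (fun x => k2 (zmap x j)) :=
            (ent_comp_eq hw0 (fun x => zmap x j) k2 k2 hk2).symm
          have h2 : ent w (fun x => k2 (zmap x j))
              ≤ ent w (fun x => (zmap x j).1)
                + ent w (fun x => (zmap x j).1 + (zmap x j).2) :=
            ent_pair_le hw0 hw1 (fun x => (zmap x j).1)
              (fun x => (zmap x j).1 + (zmap x j).2)
          have h3 : ent w (fun x => (zmap x j).1) ≤ Real.log 2 := by
            have h := ent_le_log_card hw0 hw1 (fun x => (zmap x j).1) Finset.univ
              (fun i _ => Finset.mem_univ _) (by simp)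
            simpa using h
          have h4 : ent w (fun x => (zmap x j).1 + (zmap x j).2)
              = distEntropySum P := by
            have hfun : (fun x : (Fin n → ZMod 2) × (Fin n → ZMod 2 × ZMod 2) =>
                (zmap x j).1 + (zmap x j).2)
                = (fun x => (x.2 j).1 + (x.2 j).2) := by
              funext x
              show (x.1 j + (x.2 j).1) + (x.1 j + (x.2 j).2) = (x.2 j).1 + (x.2 j).2
              exact hz2 _ _ _
            rw [hfun]
            -- compute the fiber masses
            have hco : ∀ u, fm w (fun x => x.2 j) u = p u := by
              intro u
              rw [hwdef]
              rw [fm_snd_comp_prod a m hsum_a (fun d => d j) u]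
              rw [hmdef]
              exact marg_pi p hp1 j u
            unfold Stmt14Aux.ent
            unfold distEntropySum
            refine Finset.sum_congr rfl fun b _ => ?_
            congr 1
            have hcomp := fm_comp w (fun x => x.2 j)
              (fun u : ZMod 2 × ZMod 2 => u.1 + u.2) b
            rw [Finset.sum_congr rfl (fun u _ => by rw [hco u])] at hcomp
            rw [hcomp]
            rw [ENNReal.toReal_sum (fun u _ => by
              split
              · exact hPtop u
              · exact ENNReal.zero_ne_top)]
            refine Finset.sum_congr rfl fun u _ => ?_
            rw [apply_ite ENNReal.toReal]
            rfl
          rw [h1]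
          calc ent w (fun x => k2 (zmap x j))
              ≤ ent w (fun x => (zmap x j).1)
                + ent w (fun x => (zmap x j).1 + (zmap x j).2) := h2
            _ ≤ Real.log 2 + distEntropySum P := by rw [h4]; linarith
      _ = n * (Real.log 2 + distEntropySum P) := by
          rw [Finset.sum_const, Finset.card_univ, Fintype.card_fin, nsmul_eq_mul]
  -- assemble
  have key : Real.log N + n * distEntropy P
      ≤ Real.log 2 + ent w zmap + ε * Real.log N := by
    have h0 : Real.log N + n * distEntropy P = ent w (fun x => (x.1, zmap x)) := by
      rw [hXZ, hJoint]
    rw [h0, hEW]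
    calc ent w (fun x => (x.1, (E x, zmap x)))
        ≤ ent w (fun x => (E x, zmap x)) + ∑ t : Bool × (Fin n → ZMod 2 × ZMod 2),
            fm w (fun x => (E x, zmap x)) t * (if t.1 then Real.log N else 0) := hcond
      _ = ent w (fun x => (E x, zmap x)) + ε * Real.log N := by rw [hsum_t]
      _ ≤ ent w E + ent w zmap + ε * Real.log N := by linarith
      _ ≤ Real.log 2 + ent w zmap + ε * Real.log N := by linarith
  have hring : (1 - ε) * Real.log N = Real.log N - ε * Real.log N := by ring
  have hdist : (n:ℝ) * (Real.log 2 + distEntropySum P - distEntropy P)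
      = n * (Real.log 2 + distEntropySum P) - n * distEntropy P := by ring
  rw [hring]
  linarith
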